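/- arXiv:1203.3849 — 2 statements merged into one kernel-verified Lean document; each statement's English description precedes it below -/
import Mathlib

section
/- Let φ : ℝ × X → X be a continuous flow on a topological space X, and suppose there exist points x, y, z ∈ X, open sets U ∋ x and V ∋ y, positive reals π_p, π_q with π_p/π_q irrational, and t₁, t₂ > 0, ε > 0 such that φ(-(t₁ + m·π_p), z) ∈ U for all m ∈ ℕ and φ(t₂ + n·π_q + s, z) ∈ V for all n ∈ ℕ and all |s| < ε. Then there exists τ > 0 such that φ(t, U) ∩ V ≠ ∅ for every t ≥ τ. -/
open AddSubgroup in
/-- If some integer combination of `p` and `q` lies in `(0, ε)`, and the coefficient of `p`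
is nonnegative, then natural combinations `m*p + n*q` are `ε`-dense far to the right. -/
lemma aux_approx (p q ε : ℝ) (hp : 0 < p) (hq : 0 < q) (hε : 0 < ε)
    (a b : ℤ) (hd0 : 0 < a * p + b * q) (hdε : a * p + b * q < ε) (ha : 0 ≤ a) :
    ∃ C : ℝ, ∀ T ≥ C, ∃ m n : ℕ, |T - m * p - n * q| < ε := by
  set d : ℝ := a * p + b * q with hd
  refine ⟨((q / d + 1) * (|(b : ℝ)| + 1) + 1) * q, fun T hT => ?_⟩
  have hqd : 0 < q / d := div_pos hq hd0
  set k : ℤ := ⌊T / q⌋ with hk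
  have hk1 : (k : ℝ) ≤ T / q := Int.floor_le _
  have hk2 : T / q < (k : ℝ) + 1 := Int.lt_floor_add_one _
  set r : ℝ := T - k * q with hr
  have hr0 : 0 ≤ r := by
    have := mul_le_mul_of_nonneg_right hk1 hq.le
    rw [div_mul_cancel₀ _ hq.ne'] at this
    linarith
  have hrq : r < q := by
    have := mul_lt_mul_of_pos_right hk2 hq
    rw [div_mul_cancel₀ _ hq.ne'] at this
    nlinarith
  set j : ℤ := ⌊r / d⌋ with hj
  have hj0 : 0 ≤ j := Int.floor_nonneg.2 (div_nonneg hr0 hd0.le)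
  have hj0' : (0:ℝ) ≤ (j : ℝ) := by exact_mod_cast hj0
  have hj1 : (j : ℝ) ≤ r / d := Int.floor_le _
  have hj2 : r / d < (j : ℝ) + 1 := Int.lt_floor_add_one _
  have hjd1 : (j : ℝ) * d ≤ r := by
    have := mul_le_mul_of_nonneg_right hj1 hd0.le
    rwa [div_mul_cancel₀ _ hd0.ne'] at this
  have hjd2 : r < ((j : ℝ) + 1) * d := by
    have := mul_lt_mul_of_pos_right hj2 hd0
    rwa [div_mul_cancel₀ _ hd0.ne'] at this
  have hjq : (j : ℝ) < q / d := lt_of_le_of_lt hj1 (by gcongr)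
  -- compute k lower bound
  have hkC : (q / d + 1) * (|(b : ℝ)| + 1) < (k : ℝ) := by
    have h1 : ((q / d + 1) * (|(b : ℝ)| + 1) + 1) ≤ T / q := by
      rw [le_div_iff₀ hq]; linarith
    linarith
  have hjb : -((q / d) * |(b : ℝ)|) ≤ (j : ℝ) * b := by
    have h1 : -((j : ℝ) * |(b : ℝ)|) ≤ (j : ℝ) * b := by
      nlinarith [neg_abs_le (b : ℝ)]
    have h2 : (j : ℝ) * |(b : ℝ)| ≤ (q / d) * |(b : ℝ)| := by
      nlinarith [abs_nonneg (b : ℝ)]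
    linarith
  have hn0 : 0 ≤ k + j * b := by
    have : (0:ℝ) ≤ (k : ℝ) + (j : ℝ) * (b : ℝ) := by
      nlinarith [abs_nonneg (b : ℝ)]
    exact_mod_cast this
  refine ⟨(j * a).toNat, (k + j * b).toNat, ?_⟩
  have hm : ((j * a).toNat : ℝ) = (j : ℝ) * (a : ℝ) := by
    exact_mod_cast Int.toNat_of_nonneg (mul_nonneg hj0 ha)
  have hn : (((k + j * b).toNat : ℕ) : ℝ) = (k : ℝ) + (j : ℝ) * (b : ℝ) := by
    exact_mod_cast Int.toNat_of_nonneg hn0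
  rw [hm, hn]
  have key : T - (j : ℝ) * a * p - ((k : ℝ) + (j : ℝ) * b) * q = r - (j : ℝ) * d := by
    rw [hd, hr]; ring
  rw [key, abs_lt]
  exact ⟨by linarith, by linarith⟩

theorem stmt_3 {X : Type*} [TopologicalSpace X]
    (φ : ℝ × X → X) (hcont : Continuous φ)
    (h0 : ∀ x : X, φ (0, x) = x)
    (hadd : ∀ (s t : ℝ) (x : X), φ (s + t, x) = φ (s, φ (t, x)))
    (x y z : X) (U V : Set X) (hU : IsOpen U) (hV : IsOpen V)
    (hxU : x ∈ U) (hyV : y ∈ V)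
    (πp πq : ℝ) (hπp : 0 < πp) (hπq : 0 < πq) (hirr : Irrational (πp / πq))
    (t₁ t₂ ε : ℝ) (ht₁ : 0 < t₁) (ht₂ : 0 < t₂) (hε : 0 < ε)
    (hzU : ∀ m : ℕ, φ (-(t₁ + m * πp), z) ∈ U)
    (hzV : ∀ n : ℕ, ∀ s : ℝ, |s| < ε → φ (t₂ + n * πq + s, z) ∈ V) :
    ∃ τ > 0, ∀ t ≥ τ, ∃ u ∈ U, φ (t, u) ∈ V := by
  -- the subgroup of integer combinations of πp and πq
  have main : ∃ C : ℝ, ∀ T ≥ C, ∃ m n : ℕ, |T - m * πp - n * πq| < ε := by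
    set S : AddSubgroup ℝ :=
      { carrier := {w | ∃ a b : ℤ, w = a * πp + b * πq}
        zero_mem' := ⟨0, 0, by simp⟩
        add_mem' := by
          rintro _ _ ⟨a, b, rfl⟩ ⟨c, d, rfl⟩
          exact ⟨a + c, b + d, by push_cast; ring⟩
        neg_mem' := by
          rintro _ ⟨a, b, rfl⟩
          exact ⟨-a, -b, by push_cast; ring⟩ } with hS
    have hdense : Dense (S : Set ℝ) := by
      rcases S.dense_or_cyclic with h | ⟨g, hg⟩
      · exact h
      · exfalso
        have hpS : πp ∈ S := ⟨1, 0, by simp⟩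
        have hqS : πq ∈ S := ⟨0, 1, by simp⟩
        rw [hg, AddSubgroup.mem_closure_singleton] at hpS hqS
        obtain ⟨c, hc⟩ := hpS
        obtain ⟨e, he⟩ := hqS
        have hg0 : g ≠ 0 := by
          rintro rfl; simp at he; linarith [he ▸ hπq]
        have he0 : (e : ℝ) ≠ 0 := by
          rintro h; rw [zsmul_eq_mul, h, zero_mul] at he; linarith
        apply hirr
        refine ⟨(c : ℚ) / (e : ℚ), ?_⟩
        rw [zsmul_eq_mul] at hc he
        push_cast
        rw [← hc, ← he]
        field_simp
    obtain ⟨w, hwS, hw⟩ := hdense.exists_mem_open isOpen_Ioo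
      (Set.nonempty_Ioo.2 hε)
    obtain ⟨a, b, rfl⟩ := hwS
    obtain ⟨hw0, hwε⟩ := hw
    rcases le_or_gt 0 a with ha | ha
    · exact aux_approx πp πq ε hπp hπq hε a b hw0 hwε ha
    · have hb : 0 ≤ b := by
        by_contra hb
        push_neg at hb
        have h1 : (a : ℝ) ≤ -1 := by exact_mod_cast Int.le_of_lt_add_one (by simpa using ha)
        have h2 : (b : ℝ) ≤ -1 := by exact_mod_cast Int.le_of_lt_add_one (by simpa using hb)
        nlinarith
      obtain ⟨C, hC⟩ := aux_approx πq πp ε hπq hπp hε b a (by linarith) (by linarith) hb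
      exact ⟨C, fun T hT => by
        obtain ⟨m, n, h⟩ := hC T hT
        exact ⟨n, m, by rw [show T - n * πp - m * πq = T - m * πq - n * πp by ring]; exact h⟩⟩
  obtain ⟨C, hC⟩ := main
  refine ⟨max C 1 + t₁ + t₂, by positivity, fun t ht => ?_⟩
  obtain ⟨m, n, hmn⟩ := hC (t - t₁ - t₂) (by
    have := le_max_left C 1
    linarith)
  refine ⟨φ (-(t₁ + m * πp), z), hzU m, ?_⟩
  rw [← hadd]
  have : t + -(t₁ + m * πp) = t₂ + n * πq + (t - t₁ - t₂ - m * πp - n * πq) := by ring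
  rw [this]
  exact hzV n _ hmn
end

section
/- The function H : ℝ² → ℝ defined by H(x,y) = x⁷·sin(1/x) for x ≠ 0 and H(x,y) = 0 for x = 0 is of class C², and its zero level set H⁻¹({0}) has infinitely many connected components. -/
open Real Set Filter Topology

noncomputable def fA (x : ℝ) : ℝ := if x = 0 then 0 else x ^ 7 * Real.sin (1 / x)
noncomputable def gA (x : ℝ) : ℝ :=
  if x = 0 then 0 else 7 * x ^ 6 * Real.sin (1 / x) - x ^ 5 * Real.cos (1 / x)
noncomputable def hA (x : ℝ) : ℝ :=
  if x = 0 then 0 else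
    42 * x ^ 5 * Real.sin (1 / x) - 12 * x ^ 4 * Real.cos (1 / x) - x ^ 3 * Real.sin (1 / x)

lemma abs_trig_le (c y t : ℝ) (n : ℕ) (h : |t| ≤ 1) : ‖c * y ^ n * t‖ ≤ |c| * |y| ^ n := by
  rw [Real.norm_eq_abs, abs_mul, abs_mul, abs_pow]
  exact mul_le_of_le_one_right (by positivity) h

lemma hasDerivAt_fA (x : ℝ) : HasDerivAt fA (gA x) x := by
  rcases eq_or_ne x 0 with rfl | hx
  · simp only [gA, if_pos rfl]
    rw [hasDerivAt_iff_tendsto_slope]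
    apply squeeze_zero_norm' (a := fun y => |y| ^ 6)
    · filter_upwards [self_mem_nhdsWithin] with y (hy : y ≠ 0)
      have : slope fA 0 y = y ^ 6 * Real.sin (1 / y) := by
        rw [slope_def_field, fA, fA, if_pos rfl, if_neg hy]
        field_simp
        ring
      rw [this]
      have := abs_trig_le 1 y (Real.sin (1 / y)) 6 (Real.abs_sin_le_one _)
      simpa using this
    · have : Tendsto (fun y : ℝ => |y| ^ 6) (𝓝 0) (𝓝 (|0| ^ 6)) := by
        exact (continuous_abs.pow 6).tendsto 0
      simpa using this.mono_left nhdsWithin_le_nhds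
  · have h1 : HasDerivAt (fun y : ℝ => y ^ 7 * Real.sin (1 / y))
        (7 * x ^ 6 * Real.sin (1 / x) - x ^ 5 * Real.cos (1 / x)) x := by
      have hs : HasDerivAt (fun y : ℝ => Real.sin (1 / y))
          (Real.cos (1 / x) * (-(x ^ 2)⁻¹)) x := by
        simpa [one_div, Function.comp_def] using (Real.hasDerivAt_sin (x⁻¹)).comp x (hasDerivAt_inv hx)
      have := (hasDerivAt_pow 7 x).mul hs
      refine this.congr_deriv ?_
      have hx2 : (x ^ 2)⁻¹ * x ^ 2 = 1 := inv_mul_cancel₀ (pow_ne_zero 2 hx)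
      linear_combination (-x ^ 5 * Real.cos (1 / x)) * hx2
    have heq : fA =ᶠ[𝓝 x] fun y => y ^ 7 * Real.sin (1 / y) := by
      filter_upwards [isOpen_ne.mem_nhds hx] with y hy
      simp [fA, hy]
    rw [gA, if_neg hx]
    exact h1.congr_of_eventuallyEq heq

lemma hasDerivAt_gA (x : ℝ) : HasDerivAt gA (hA x) x := by
  rcases eq_or_ne x 0 with rfl | hx
  · simp only [hA, if_pos rfl]
    rw [hasDerivAt_iff_tendsto_slope]
    apply squeeze_zero_norm' (a := fun y => 7 * |y| ^ 5 + |y| ^ 4)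
    · filter_upwards [self_mem_nhdsWithin] with y (hy : y ≠ 0)
      have : slope gA 0 y = 7 * y ^ 5 * Real.sin (1 / y) - y ^ 4 * Real.cos (1 / y) := by
        rw [slope_def_field, gA, gA, if_pos rfl, if_neg hy]
        field_simp
        ring
      rw [this]
      calc ‖7 * y ^ 5 * Real.sin (1 / y) - y ^ 4 * Real.cos (1 / y)‖
          ≤ ‖7 * y ^ 5 * Real.sin (1 / y)‖ + ‖y ^ 4 * Real.cos (1 / y)‖ := norm_sub_le _ _
        _ ≤ 7 * |y| ^ 5 + |y| ^ 4 := by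
            have h1 := abs_trig_le 7 y (Real.sin (1 / y)) 5 (Real.abs_sin_le_one _)
            have h2 := abs_trig_le 1 y (Real.cos (1 / y)) 4 (Real.abs_cos_le_one _)
            have e1 : (|7| : ℝ) = 7 := by norm_num
            rw [e1] at h1
            exact add_le_add h1 (by simpa using h2)
    · have : Tendsto (fun y : ℝ => 7 * |y| ^ 5 + |y| ^ 4) (𝓝 0)
          (𝓝 (7 * |(0:ℝ)| ^ 5 + |(0:ℝ)| ^ 4)) :=
        ((continuous_const.mul (continuous_abs.pow 5)).add (continuous_abs.pow 4)).tendsto 0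
      simpa using this.mono_left nhdsWithin_le_nhds
  · have hs : HasDerivAt (fun y : ℝ => Real.sin (1 / y))
        (Real.cos (1 / x) * (-(x ^ 2)⁻¹)) x := by
      simpa [one_div, Function.comp_def] using (Real.hasDerivAt_sin (x⁻¹)).comp x (hasDerivAt_inv hx)
    have hc : HasDerivAt (fun y : ℝ => Real.cos (1 / y))
        (-Real.sin (1 / x) * (-(x ^ 2)⁻¹)) x := by
      simpa [one_div, Function.comp_def] using (Real.hasDerivAt_cos (x⁻¹)).comp x (hasDerivAt_inv hx)
    have h1 : HasDerivAt (fun y : ℝ => 7 * y ^ 6 * Real.sin (1 / y) - y ^ 5 * Real.cos (1 / y))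
        (42 * x ^ 5 * Real.sin (1 / x) - 12 * x ^ 4 * Real.cos (1 / x)
          - x ^ 3 * Real.sin (1 / x)) x := by
      have hp6 : HasDerivAt (fun y : ℝ => 7 * y ^ 6) (7 * (6 * x ^ 5)) x :=
        (hasDerivAt_pow 6 x).const_mul 7
      have := (hp6.mul hs).sub ((hasDerivAt_pow 5 x).mul hc)
      refine this.congr_deriv ?_
      have hx2 : (x ^ 2)⁻¹ * x ^ 2 = 1 := inv_mul_cancel₀ (pow_ne_zero 2 hx)
      linear_combination (-(7 * x ^ 4 * Real.cos (1 / x) + x ^ 3 * Real.sin (1 / x))) * hx2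
    have heq : gA =ᶠ[𝓝 x] fun y => 7 * y ^ 6 * Real.sin (1 / y) - y ^ 5 * Real.cos (1 / y) := by
      filter_upwards [isOpen_ne.mem_nhds hx] with y hy
      simp [gA, hy]
    rw [hA, if_neg hx]
    exact h1.congr_of_eventuallyEq heq

lemma continuous_hA : Continuous hA := by
  rw [continuous_iff_continuousAt]
  intro x
  rcases eq_or_ne x 0 with rfl | hx
  · have h0 : hA 0 = 0 := by simp [hA]
    rw [ContinuousAt, h0]
    apply squeeze_zero_norm' (a := fun y => 42 * |y| ^ 5 + 12 * |y| ^ 4 + |y| ^ 3)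
    · filter_upwards with y
      rcases eq_or_ne y 0 with rfl | hy
      · simp [hA]
      · rw [hA, if_neg hy]
        calc ‖42 * y ^ 5 * Real.sin (1 / y) - 12 * y ^ 4 * Real.cos (1 / y)
              - y ^ 3 * Real.sin (1 / y)‖
            ≤ ‖42 * y ^ 5 * Real.sin (1 / y) - 12 * y ^ 4 * Real.cos (1 / y)‖
              + ‖y ^ 3 * Real.sin (1 / y)‖ := norm_sub_le _ _
          _ ≤ (‖42 * y ^ 5 * Real.sin (1 / y)‖ + ‖12 * y ^ 4 * Real.cos (1 / y)‖)
              + ‖y ^ 3 * Real.sin (1 / y)‖ := by gcongr; exact norm_sub_le _ _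
          _ ≤ (42 * |y| ^ 5 + 12 * |y| ^ 4) + |y| ^ 3 := by
              have h1 := abs_trig_le 42 y (Real.sin (1 / y)) 5 (Real.abs_sin_le_one _)
              have h2 := abs_trig_le 12 y (Real.cos (1 / y)) 4 (Real.abs_cos_le_one _)
              have h3 := abs_trig_le 1 y (Real.sin (1 / y)) 3 (Real.abs_sin_le_one _)
              have e1 : (|42| : ℝ) = 42 := by norm_num
              have e2 : (|12| : ℝ) = 12 := by norm_num
              rw [e1] at h1; rw [e2] at h2
              exact add_le_add (add_le_add h1 h2) (by simpa using h3)
          _ = 42 * |y| ^ 5 + 12 * |y| ^ 4 + |y| ^ 3 := by ring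
    · have : Tendsto (fun y : ℝ => 42 * |y| ^ 5 + 12 * |y| ^ 4 + |y| ^ 3) (𝓝 0)
          (𝓝 (42 * |(0:ℝ)| ^ 5 + 12 * |(0:ℝ)| ^ 4 + |(0:ℝ)| ^ 3)) :=
        (((continuous_const.mul (continuous_abs.pow 5)).add
          (continuous_const.mul (continuous_abs.pow 4))).add (continuous_abs.pow 3)).tendsto 0
      simpa using this
  · have heq : hA =ᶠ[𝓝 x] fun y =>
        42 * y ^ 5 * Real.sin (1 / y) - 12 * y ^ 4 * Real.cos (1 / y)
          - y ^ 3 * Real.sin (1 / y) := by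
      filter_upwards [isOpen_ne.mem_nhds hx] with y hy
      simp [hA, hy]
    apply ContinuousAt.congr _ heq.symm
    fun_prop (disch := assumption)

lemma contDiff_fA : ContDiff ℝ 2 fA := by
  have hdf : deriv fA = gA := funext fun x => (hasDerivAt_fA x).deriv
  have hdg : deriv gA = hA := funext fun x => (hasDerivAt_gA x).deriv
  rw [show (2 : WithTop ℕ∞) = 1 + 1 from rfl, contDiff_succ_iff_deriv]
  refine ⟨fun x => (hasDerivAt_fA x).differentiableAt, by simp, ?_⟩
  rw [hdf, contDiff_one_iff_deriv, hdg]
  exact ⟨fun x => (hasDerivAt_gA x).differentiableAt, continuous_hA⟩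

lemma subsingleton_of_preconnected_countable {s : Set ℝ} (hs : IsPreconnected s)
    (hc : s.Countable) : s.Subsingleton := by
  intro a ha b hb
  by_contra hab
  wlog h : a < b generalizing a b with W
  · exact W hb ha (Ne.symm hab) ((Ne.lt_or_gt hab).resolve_left h)
  · have hsub : Set.Icc a b ⊆ s := hs.ordConnected.out ha hb
    have : (Set.Icc a b).Countable := hc.mono hsub
    have hle := this.le_aleph0
    rw [Cardinal.mk_Icc_real h] at hle
    exact absurd hle (not_le.mpr Cardinal.aleph0_lt_continuum)

lemma fA_zero_subset : {x : ℝ | fA x = 0} ⊆ Set.range (fun n : ℤ => ((n : ℝ) * Real.pi)⁻¹) := by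
  intro x hx
  rcases eq_or_ne x 0 with rfl | hx0
  · exact ⟨0, by simp⟩
  · have h : x ^ 7 * Real.sin (1 / x) = 0 := by simpa [fA, hx0] using hx
    have h7 : x ^ 7 ≠ 0 := pow_ne_zero _ hx0
    have hsin : Real.sin (1 / x) = 0 := by
      rcases mul_eq_zero.mp h with h' | h'
      · exact absurd h' h7
      · exact h'
    obtain ⟨n, hn⟩ := Real.sin_eq_zero_iff.mp hsin
    refine ⟨n, ?_⟩
    show ((n : ℝ) * Real.pi)⁻¹ = x
    rw [hn, one_div, inv_inv]

lemma fA_zero_at (k : ℕ) : fA (((k : ℝ) + 1) * Real.pi)⁻¹ = 0 := by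
  have hk : ((k : ℝ) + 1) * Real.pi ≠ 0 :=
    mul_ne_zero (by positivity) Real.pi_ne_zero
  rw [fA, if_neg (inv_ne_zero hk), one_div, inv_inv]
  have : ((k : ℝ) + 1) * Real.pi = ((k + 1 : ℕ) : ℝ) * Real.pi := by push_cast; ring
  rw [this, Real.sin_nat_mul_pi]
  ring

theorem stmt_6 (H : ℝ × ℝ → ℝ)
    (hH : ∀ p : ℝ × ℝ, H p = if p.1 = 0 then 0 else p.1 ^ 7 * Real.sin (1 / p.1)) :
    ContDiff ℝ 2 H ∧ Infinite (ConnectedComponents ↥(H ⁻¹' {0})) := by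
  have hHf : H = fun p => fA p.1 := funext fun p => by rw [hH]; rfl
  subst hHf
  constructor
  · exact contDiff_fA.comp contDiff_fst
  · set S : Set (ℝ × ℝ) := (fun p : ℝ × ℝ => fA p.1) ⁻¹' {0} with hS
    have hmem : ∀ k : ℕ, ((((k : ℝ) + 1) * Real.pi)⁻¹, (0 : ℝ)) ∈ S := fun k => by
      simp only [hS, Set.mem_preimage, Set.mem_singleton_iff]
      exact fA_zero_at k
    have hfirst : ∀ q : ↥S, fA (q : ℝ × ℝ).1 = 0 := fun q => q.2
    -- the map to ℝ
    have hconst : ∀ a b : ↥S, (a : ConnectedComponents ↥S) = b →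
        (a : ℝ × ℝ).1 = (b : ℝ × ℝ).1 := by
      intro a b hab
      have hmemc : a ∈ connectedComponent b := ConnectedComponents.coe_eq_coe'.mp hab
      have hpre : IsPreconnected (connectedComponent b) := isPreconnected_connectedComponent
      have hcont : Continuous (fun q : ↥S => (q : ℝ × ℝ).1) :=
        continuous_fst.comp continuous_subtype_val
      have himg : IsPreconnected ((fun q : ↥S => (q : ℝ × ℝ).1) '' connectedComponent b) :=
        hpre.image _ hcont.continuousOn
      have hsub : (fun q : ↥S => (q : ℝ × ℝ).1) '' connectedComponent b ⊆ {x : ℝ | fA x = 0} := by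
        rintro x ⟨q, _, rfl⟩
        exact hfirst q
      have hcnt : ((fun q : ↥S => (q : ℝ × ℝ).1) '' connectedComponent b).Countable :=
        ((Set.countable_range _).mono fA_zero_subset).mono hsub
      have hss := subsingleton_of_preconnected_countable himg hcnt
      exact hss ⟨a, hmemc, rfl⟩ ⟨b, mem_connectedComponent, rfl⟩
    have hinj : Function.Injective
        (fun k : ℕ => ((⟨((((k : ℝ) + 1) * Real.pi)⁻¹, 0), hmem k⟩ : ↥S) :
          ConnectedComponents ↥S)) := by
      intro k j hkj
      have h1 := hconst _ _ hkj
      simp only at h1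
      have hπ := Real.pi_ne_zero
      have : ((k : ℝ) + 1) * Real.pi = ((j : ℝ) + 1) * Real.pi := by
        have hk : ((k : ℝ) + 1) * Real.pi ≠ 0 := mul_ne_zero (by positivity) hπ
        have hj : ((j : ℝ) + 1) * Real.pi ≠ 0 := mul_ne_zero (by positivity) hπ
        exact inv_injective h1
      have h2 : (k : ℝ) + 1 = (j : ℝ) + 1 := mul_right_cancel₀ hπ this
      have : (k : ℝ) = (j : ℝ) := by linarith
      exact_mod_cast this
    exact Infinite.of_injective _ hinj
end
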